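/- Let c, k, and l be integers with 0 <= l < C(c,2) + c, and let R be a positive integer such that every coloring of the edges of a complete graph on R vertices with at most 4 colors admits a monochromatic complete subgraph on 3k vertices. Let G be a graph, and let X = (X1, X2, ..., X_R) be a c-uniform chain of length R in G such that the first l pairs in {(j1,j2) : 1 <= j1 <= j2 <= c} with respect to the lexicographic order are fixed with respect to X and G. Then there exist a graph G~ and a subchain Y of X of length k such that G~ is obtained from G by applying local complementations at vertices in V(X) minus V(Y), and the first l+1 pairs in the lexicographic order are fixed with respect to Y and G~. -/

import Mathlib

set_option maxHeartbeats 1000000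


namespace EP

variable {V : Type}

/-- Local complementation of `G` at `v`. -/
def localComp (G : SimpleGraph V) (v : V) : SimpleGraph V where
  Adj x y := x ≠ y ∧
    ((G.Adj v x ∧ G.Adj v y ∧ ¬ G.Adj x y) ∨ (¬(G.Adj v x ∧ G.Adj v y) ∧ G.Adj x y))
  symm := by
    constructor
    intro x y h
    obtain ⟨hxy, h⟩ := h
    refine ⟨hxy.symm, ?_⟩
    rcases h with ⟨h1, h2, h3⟩ | ⟨h1, h2⟩
    · exact Or.inl ⟨h2, h1, fun h => h3 h.symm⟩
    · exact Or.inr ⟨fun h => h1 ⟨h.2, h.1⟩, h2.symm⟩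
  loopless := ⟨fun x h => h.1 rfl⟩

/-- `G'` is obtained from `G` by a sequence of local complementations at
vertices belonging to `Z`. -/
def LocEquivWithin (Z : Set V) (G G' : SimpleGraph V) : Prop :=
  Relation.ReflTransGen (fun A B => ∃ v ∈ Z, B = localComp A v) G G'

/-- The pair `(j₁, j₂)` is fixed with respect to the `c`-uniform chain `X` (of length `n`)
and the graph `G`: there is no edge between the `j₁`-th vertex of one part and the
`j₂`-th vertex of a different part. -/
def FixedPair (G : SimpleGraph V) {n c : ℕ} (X : Fin n → Fin c → V) (j₁ j₂ : Fin c) : Prop :=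
  ∀ i₁ i₂ : Fin n, i₁ ≠ i₂ → ¬ G.Adj (X i₁ j₁) (X i₂ j₂)

/-- The (0-based) position of the pair `(j₁, j₂)` in the lexicographic order on
`{(a, b) : a ≤ b}`: the number of such pairs strictly lexicographically smaller. -/
def pairIdx (c : ℕ) (j₁ j₂ : Fin c) : ℕ :=
  ((Finset.univ : Finset (Fin c × Fin c)).filter
    (fun p => p.1 ≤ p.2 ∧ (p.1 < j₁ ∨ (p.1 = j₁ ∧ p.2 < j₂)))).card

lemma adj_localComp (G : SimpleGraph V) (v x y : V) (hxy : x ≠ y) :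
    (localComp G v).Adj x y ↔ Xor' (G.Adj x y) (G.Adj v x ∧ G.Adj v y) := by
  simp only [localComp, Xor', Xor]
  tauto

/-- pivot as three local complementations -/
def pivot (G : SimpleGraph V) (u w : V) : SimpleGraph V :=
  localComp (localComp (localComp G u) w) u

lemma adj_pivot (G : SimpleGraph V) (u w x y : V) (huw : G.Adj u w)
    (hxy : x ≠ y) (hxu : x ≠ u) (hxw : x ≠ w) (hyu : y ≠ u) (hyw : y ≠ w) :
    (pivot G u w).Adj x y ↔
      Xor' (G.Adj x y) (Xor' (G.Adj x u ∧ G.Adj y w) (G.Adj x w ∧ G.Adj y u)) := by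
  have huw' : u ≠ w := huw.ne
  have h1 : ∀ a b : V, a ≠ b → ((localComp G u).Adj a b ↔
      Xor' (G.Adj a b) (G.Adj u a ∧ G.Adj u b)) := fun a b h => adj_localComp G u a b h
  rw [pivot, adj_localComp _ u x y hxy, adj_localComp _ w x y hxy,
    adj_localComp _ w u x hxu.symm, adj_localComp _ w u y hyu.symm,
    h1 x y hxy, h1 w x hxw.symm, h1 w y hyw.symm, h1 u x hxu.symm, h1 u y hyu.symm,
    h1 w u huw'.symm]
  have h2 : G.Adj w u ↔ G.Adj u w := G.adj_comm w u
  have h3 : G.Adj u x ↔ G.Adj x u := G.adj_comm u x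
  have h4 : G.Adj u y ↔ G.Adj y u := G.adj_comm u y
  have h5 : G.Adj w x ↔ G.Adj x w := G.adj_comm w x
  have h6 : G.Adj w y ↔ G.Adj y w := G.adj_comm w y
  have hu : G.Adj u u ↔ False := iff_false_intro (G.irrefl)
  have hw : G.Adj w w ↔ False := iff_false_intro (G.irrefl)
  have huw2 : G.Adj u w ↔ True := iff_true_intro huw
  rw [h2, h3, h4, h5, h6, hu, huw2]
  by_cases A : G.Adj x y <;> by_cases B : G.Adj x u <;> by_cases C : G.Adj x w <;>
    by_cases D : G.Adj y u <;> by_cases E : G.Adj y w <;>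
    simp only [A, B, C, D, E, Xor', Xor, iff_true, iff_false, true_and, and_true, false_and,
      and_false, not_true, not_false_eq_true, not_false_iff, true_or, or_true, false_or,
      or_false, true_implies, false_implies, implies_true, true_iff, false_iff, not_not,
      iff_self, and_self, or_self, not_and, and_imp, true_iff]


lemma locEquiv_refl (Z : Set V) (G : SimpleGraph V) : LocEquivWithin Z G G :=
  Relation.ReflTransGen.refl

lemma locEquiv_step {Z : Set V} {G G' : SimpleGraph V} (v : V) (hv : v ∈ Z)
    (h : LocEquivWithin Z G G') : LocEquivWithin Z G (localComp G' v) :=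
  h.tail ⟨v, hv, rfl⟩

lemma locEquiv_pivot {Z : Set V} {G G' : SimpleGraph V} (u w : V) (hu : u ∈ Z) (hw : w ∈ Z)
    (h : LocEquivWithin Z G G') : LocEquivWithin Z G (pivot G' u w) :=
  locEquiv_step u hu (locEquiv_step w hw (locEquiv_step u hu h))

lemma locEquiv_mono {Z Z' : Set V} (hZ : Z ⊆ Z') {G G' : SimpleGraph V}
    (h : LocEquivWithin Z G G') : LocEquivWithin Z' G G' := by
  induction h with
  | refl => exact Relation.ReflTransGen.refl
  | tail _ hstep ih =>
    obtain ⟨v, hv, rfl⟩ := hstep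
    exact ih.tail ⟨v, hZ hv, rfl⟩

section PairIdx

variable {c : ℕ}

/-- lexicographic strict order on pairs -/
def lexLt (a b x y : Fin c) : Prop := a < x ∨ (a = x ∧ b < y)

lemma pairIdx_lt_of_lexLt {a b x y : Fin c} (hab : a ≤ b) (hlex : lexLt a b x y) :
    pairIdx c a b < pairIdx c x y := by
  apply Finset.card_lt_card
  constructor
  · intro p hp
    simp only [Finset.mem_filter, Finset.mem_univ, true_and] at hp ⊢
    rcases hp with ⟨h1, h2⟩
    refine ⟨h1, ?_⟩
    rcases hlex with hx | ⟨rfl, hy⟩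
    · rcases h2 with h | ⟨rfl, h⟩
      · exact Or.inl (h.trans hx)
      · exact Or.inl hx
    · exact h2.imp id (fun ⟨he, hb⟩ => ⟨he, hb.trans hy⟩)
  · intro hsub
    have : (a, b) ∈ (Finset.univ : Finset (Fin c × Fin c)).filter
        (fun p => p.1 ≤ p.2 ∧ (p.1 < x ∨ (p.1 = x ∧ p.2 < y))) := by
      simp only [Finset.mem_filter, Finset.mem_univ, true_and]
      exact ⟨hab, hlex⟩
    have h2 := hsub this
    simp only [Finset.mem_filter, Finset.mem_univ, true_and] at h2
    rcases h2.2 with h | h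
    · exact absurd h (lt_irrefl _)
    · exact absurd h (lt_irrefl _)

lemma lex_trichotomy (a b x y : Fin c) :
    lexLt a b x y ∨ (a = x ∧ b = y) ∨ lexLt x y a b := by
  rcases lt_trichotomy a x with h | h | h
  · exact Or.inl (Or.inl h)
  · rcases lt_trichotomy b y with h' | h' | h'
    · exact Or.inl (Or.inr ⟨h, h'⟩)
    · exact Or.inr (Or.inl ⟨h, h'⟩)
    · exact Or.inr (Or.inr (Or.inr ⟨h.symm, h'⟩))
  · exact Or.inr (Or.inr (Or.inl h))

lemma pairIdx_eq_iff {a b x y : Fin c} (hab : a ≤ b) (hxy : x ≤ y)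
    (h : pairIdx c a b = pairIdx c x y) : a = x ∧ b = y := by
  rcases lex_trichotomy a b x y with hl | he | hl
  · exact absurd h (Nat.ne_of_lt (pairIdx_lt_of_lexLt hab hl))
  · exact he
  · exact absurd h.symm (Nat.ne_of_lt (pairIdx_lt_of_lexLt hxy hl))

lemma lexLt_of_pairIdx_lt {a b x y : Fin c} (hab : a ≤ b) (hxy : x ≤ y)
    (h : pairIdx c a b < pairIdx c x y) : lexLt a b x y := by
  rcases lex_trichotomy a b x y with hl | ⟨rfl, rfl⟩ | hl
  · exact hl
  · exact absurd h (lt_irrefl _)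
  · exact absurd (pairIdx_lt_of_lexLt hxy hl) (by omega)

lemma card_le_pairs : ((Finset.univ : Finset (Fin c × Fin c)).filter
    (fun p => p.1 ≤ p.2)).card = Nat.choose c 2 + c := by
  classical
  set Sle := (Finset.univ : Finset (Fin c × Fin c)).filter (fun p => p.1 ≤ p.2) with hSle
  set Slt := (Finset.univ : Finset (Fin c × Fin c)).filter (fun p => p.1 < p.2) with hSlt
  set Sgt := (Finset.univ : Finset (Fin c × Fin c)).filter (fun p => p.2 < p.1) with hSgt
  set Seq := (Finset.univ : Finset (Fin c × Fin c)).filter (fun p => p.1 = p.2) with hSeq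
  have c1 : Slt.card = Sgt.card := by
    apply Finset.card_bij' (fun p _ => Prod.swap p) (fun p _ => Prod.swap p)
    · intro p hp
      simp only [Slt, Sgt, Finset.mem_filter, Finset.mem_univ, true_and] at hp ⊢
      exact hp
    · intro p hp
      simp only [Slt, Sgt, Finset.mem_filter, Finset.mem_univ, true_and] at hp ⊢
      exact hp
    · intro p _; exact Prod.swap_swap p
    · intro p _; exact Prod.swap_swap p
  have c2 : Sle.card = Slt.card + Seq.card := by
    have : Sle = Slt ∪ Seq := by
      ext p
      simp only [Sle, Slt, Seq, Finset.mem_filter, Finset.mem_univ, true_and,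
        Finset.mem_union]
      exact le_iff_lt_or_eq
    rw [this, Finset.card_union_of_disjoint]
    rw [Finset.disjoint_filter]
    intro p _ h1 h2
    exact absurd (h2 ▸ h1) (lt_irrefl _)
  have c3 : Sle.card + Sgt.card = c * c := by
    have h := Finset.card_filter_add_card_filter_not
      (s := (Finset.univ : Finset (Fin c × Fin c))) (p := fun p => p.1 ≤ p.2)
    simp only [not_le] at h
    rw [← hSle, ← hSgt] at h
    have huniv : (Finset.univ : Finset (Fin c × Fin c)).card = c * c := by
      simp [Finset.card_univ]
    omega
  have c4 : Seq.card = c := by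
    have : Seq = (Finset.univ : Finset (Fin c)).image (fun a => (a, a)) := by
      ext p
      simp only [Seq, Finset.mem_filter, Finset.mem_univ, true_and, Finset.mem_image]
      aesop
    rw [this, Finset.card_image_of_injective _ (fun a b h => (Prod.ext_iff.1 h).1),
      Finset.card_univ, Fintype.card_fin]
  have hch : Nat.choose c 2 * 2 = c * c - c := by
    rw [Nat.choose_two_right]
    rcases Nat.eq_zero_or_pos c with rfl | hc
    · simp
    · have he : Even (c * (c - 1)) := by
        rcases Nat.even_or_odd c with h | h
        · exact h.mul_right _
        · refine Even.mul_left ?_ _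
          rcases h with ⟨m, hm⟩
          exact ⟨m, by omega⟩
      obtain ⟨m, hm⟩ := he
      have h2 : c * (c - 1) / 2 = m := by omega
      rw [h2]
      have : c * (c - 1) = c * c - c := by
        rw [← Nat.pred_eq_sub_one, Nat.mul_pred]
      omega
  have hcc : c ≤ c * c := by
    rcases Nat.eq_zero_or_pos c with rfl | hc
    · simp
    · calc c = c * 1 := (mul_one c).symm
        _ ≤ c * c := Nat.mul_le_mul_left c hc
  omega

lemma exists_pairIdx_eq {l : ℕ} (hl : l < Nat.choose c 2 + c) :
    ∃ x y : Fin c, x ≤ y ∧ pairIdx c x y = l := by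
  classical
  set S := (Finset.univ : Finset (Fin c × Fin c)).filter (fun p => p.1 ≤ p.2) with hS
  have hmem : ∀ p : Fin c × Fin c, p ∈ S ↔ p.1 ≤ p.2 := by
    intro p; simp [hS]
  have hcard : S.card = Nat.choose c 2 + c := card_le_pairs
  have hinj : Set.InjOn (fun p : Fin c × Fin c => pairIdx c p.1 p.2) S := by
    intro p hp q hq h
    have := pairIdx_eq_iff ((hmem p).1 hp) ((hmem q).1 hq) h
    exact Prod.ext this.1 this.2
  have hlt : ∀ p ∈ S, pairIdx c p.1 p.2 < S.card := by
    intro p hp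
    have hsub : (Finset.univ : Finset (Fin c × Fin c)).filter
        (fun q => q.1 ≤ q.2 ∧ (q.1 < p.1 ∨ (q.1 = p.1 ∧ q.2 < p.2))) ⊆ S.erase p := by
      intro q hq
      simp only [Finset.mem_filter, Finset.mem_univ, true_and] at hq
      rw [Finset.mem_erase, hmem]
      refine ⟨?_, hq.1⟩
      rintro rfl
      rcases hq.2 with h | ⟨_, h⟩ <;> exact absurd h (lt_irrefl _)
    have h1 : pairIdx c p.1 p.2 ≤ (S.erase p).card := Finset.card_le_card hsub
    have h2 : (S.erase p).card < S.card := Finset.card_erase_lt_of_mem hp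
    omega
  have himg : S.image (fun p : Fin c × Fin c => pairIdx c p.1 p.2) = Finset.range S.card := by
    apply Finset.eq_of_subset_of_card_le
    · intro n hn
      simp only [Finset.mem_image] at hn
      obtain ⟨p, hp, rfl⟩ := hn
      exact Finset.mem_range.2 (hlt p hp)
    · rw [Finset.card_range, Finset.card_image_of_injOn hinj]
  have : l ∈ S.image (fun p : Fin c × Fin c => pairIdx c p.1 p.2) := by
    rw [himg, Finset.mem_range, hcard]; exact hl
  simp only [Finset.mem_image] at this
  obtain ⟨p, hp, hpl⟩ := this
  exact ⟨p.1, p.2, (hmem p).1 hp, hpl⟩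

end PairIdx


section Core

/-- iterated pivots -/
def seqGraph (G : SimpleGraph V) (f g : ℕ → V) : ℕ → SimpleGraph V
  | 0 => G
  | (q+1) => pivot (seqGraph G f g q) (f q) (g q)

lemma seqGraph_locEquiv (G : SimpleGraph V) (f g : ℕ → V) (Z : Set V) (r : ℕ)
    (hf : ∀ q, q < r → f q ∈ Z) (hg : ∀ q, q < r → g q ∈ Z) :
    LocEquivWithin Z G (seqGraph G f g r) := by
  induction r with
  | zero => exact locEquiv_refl Z G
  | succ q ih =>
    exact locEquiv_pivot _ _ (hf q (by omega)) (hg q (by omega))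
      (ih (fun q' h => hf q' (by omega)) (fun q' h => hg q' (by omega)))

variable {R c : ℕ}

lemma core (G : SimpleGraph V) (X : Fin R → Fin c → V)
    (hX : Function.Injective fun p : Fin R × Fin c => X p.1 p.2)
    (j₁ j₂ : Fin c) (hj : j₁ < j₂) (k : ℕ) (hk : 0 < k)
    (s : Fin (3*k) → Fin R) (hs : Function.Injective s)
    (I1 : ∀ a : Fin c, a < j₂ → ∀ i m : Fin R, i ≠ m → ¬ G.Adj (X i a) (X m j₁))
    (I2 : ∀ a : Fin c, a < j₁ → ∀ i m : Fin R, i ≠ m → ¬ G.Adj (X i a) (X m j₂))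
    (I3 : ∀ a b : Fin c, lexLt a b j₁ j₂ → ∀ i m : Fin R, i ≠ m → ¬ G.Adj (X i a) (X m b))
    (hpat : ∀ p p' : Fin (3*k), p ≠ p' → (G.Adj (X (s p) j₁) (X (s p') j₂) ↔ p < p')) :
    ∃ Gt : SimpleGraph V,
      LocEquivWithin {v | (∃ i j, X i j = v) ∧
        ∀ q : Fin (3*k), q.val % 3 = 1 → ∀ j : Fin c, X (s q) j ≠ v} G Gt ∧
      (∀ a b : Fin c, lexLt a b j₁ j₂ → ∀ p p' : Fin (3*k),
        p.val % 3 = 1 → p'.val % 3 = 1 → p ≠ p' → ¬ Gt.Adj (X (s p) a) (X (s p') b)) ∧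
      (∀ p p' : Fin (3*k), p.val % 3 = 1 → p'.val % 3 = 1 → p ≠ p' →
        ¬ Gt.Adj (X (s p) j₁) (X (s p') j₂)) := by
  classical
  have hne : ∀ (p p' : Fin (3*k)) (a b : Fin c), p ≠ p' → X (s p) a ≠ X (s p') b := by
    intro p p' a b hpp h
    have h2 : ((s p, a) : Fin R × Fin c) = (s p', b) := hX h
    exact hpp (hs (congrArg Prod.fst h2))
  have hvne : ∀ (p p' : Fin (3*k)), p.val ≠ p'.val → p ≠ p' := by
    intro p p' h hh; exact h (congrArg Fin.val hh)
  -- the pivot vertex sequences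
  set f : ℕ → V := fun q => X (s ⟨3*(q % k), by
    have := Nat.mod_lt q hk; omega⟩) j₁ with hfdef
  set g : ℕ → V := fun q => X (s ⟨3*(q % k)+2, by
    have := Nat.mod_lt q hk; omega⟩) j₂ with hgdef
  -- The master invariant
  have main : ∀ r : ℕ, r ≤ k →
      (∀ a : Fin c, a < j₂ → ∀ p p' : Fin (3*k),
        (p.val % 3 = 1 ∨ 3*r ≤ p.val) → (p'.val % 3 = 1 ∨ 3*r ≤ p'.val) → p ≠ p' →
        ¬ (seqGraph G f g r).Adj (X (s p) a) (X (s p') j₁)) ∧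
      (∀ a : Fin c, a < j₁ → ∀ p p' : Fin (3*k),
        (p.val % 3 = 1 ∨ 3*r ≤ p.val) → (p'.val % 3 = 1 ∨ 3*r ≤ p'.val) → p ≠ p' →
        ¬ (seqGraph G f g r).Adj (X (s p) a) (X (s p') j₂)) ∧
      (∀ a b : Fin c, lexLt a b j₁ j₂ → ∀ p p' : Fin (3*k),
        (p.val % 3 = 1 ∨ 3*r ≤ p.val) → (p'.val % 3 = 1 ∨ 3*r ≤ p'.val) → p ≠ p' →
        ¬ (seqGraph G f g r).Adj (X (s p) a) (X (s p') b)) ∧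
      (∀ p p' : Fin (3*k),
        (p.val % 3 = 1 ∨ 3*r ≤ p.val) → (p'.val % 3 = 1 ∨ 3*r ≤ p'.val) → p ≠ p' →
        ((seqGraph G f g r).Adj (X (s p) j₁) (X (s p') j₂) ↔
          Xor' (p.val < p'.val) ((p.val+1)/3 < r ∧ 3*((p.val+1)/3) < p'.val))) := by
    intro r
    induction r with
    | zero =>
      intro _
      refine ⟨?_, ?_, ?_, ?_⟩
      · intro a ha p p' _ _ hpp
        exact I1 a ha (s p) (s p') (fun h => hpp (hs h))
      · intro a ha p p' _ _ hpp
        exact I2 a ha (s p) (s p') (fun h => hpp (hs h))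
      · intro a b hab p p' _ _ hpp
        exact I3 a b hab (s p) (s p') (fun h => hpp (hs h))
      · intro p p' _ _ hpp
        rw [show seqGraph G f g 0 = G from rfl, hpat p p' hpp]
        simp only [Xor']
        constructor
        · intro h; exact Or.inl ⟨h, by omega⟩
        · rintro (⟨h, -⟩ | ⟨⟨h, -⟩, -⟩)
          · exact h
          · omega
    | succ r ih =>
      intro hrk1
      have hrk : r < k := by omega
      obtain ⟨ih1, ih2, ih3, ih4⟩ := ih (by omega)
      have hA : 3*r < 3*k := by omega
      have hC : 3*r+2 < 3*k := by omega
      have hACv : (⟨3*r, hA⟩ : Fin (3*k)).val = 3*r := rfl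
      have hCCv : (⟨3*r+2, hC⟩ : Fin (3*k)).val = 3*r+2 := rfl
      have hfr : f r = X (s ⟨3*r, hA⟩) j₁ := by
        have he : (⟨3*(r % k), by have := Nat.mod_lt r hk; omega⟩ : Fin (3*k)) = ⟨3*r, hA⟩ :=
          Fin.ext (by simp only [Nat.mod_eq_of_lt hrk])
        rw [hfdef]
        simp only
        rw [he]
      have hgr : g r = X (s ⟨3*r+2, hC⟩) j₂ := by
        have he : (⟨3*(r % k)+2, by have := Nat.mod_lt r hk; omega⟩ : Fin (3*k)) = ⟨3*r+2, hC⟩ :=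
          Fin.ext (by simp only [Nat.mod_eq_of_lt hrk])
        rw [hgdef]
        simp only
        rw [he]
      have hGr : seqGraph G f g (r+1) =
          pivot (seqGraph G f g r) (X (s ⟨3*r, hA⟩) j₁) (X (s ⟨3*r+2, hC⟩) j₂) := by
        rw [show seqGraph G f g (r+1) = pivot (seqGraph G f g r) (f r) (g r) from rfl,
          hfr, hgr]
      have haliveA : ((⟨3*r, hA⟩ : Fin (3*k)).val % 3 = 1 ∨ 3*r ≤ (⟨3*r, hA⟩ : Fin (3*k)).val) :=
        Or.inr (by omega)
      have haliveC : ((⟨3*r+2, hC⟩ : Fin (3*k)).val % 3 = 1 ∨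
          3*r ≤ (⟨3*r+2, hC⟩ : Fin (3*k)).val) := Or.inr (by omega)
      have hACne : (⟨3*r, hA⟩ : Fin (3*k)) ≠ ⟨3*r+2, hC⟩ :=
        Fin.ne_of_val_ne (by omega)
      have hedge : (seqGraph G f g r).Adj (X (s ⟨3*r, hA⟩) j₁) (X (s ⟨3*r+2, hC⟩) j₂) := by
        rw [show ((seqGraph G f g r).Adj (X (s ⟨3*r, hA⟩) j₁) (X (s ⟨3*r+2, hC⟩) j₂) ↔
          Xor' (3*r < 3*r+2) ((3*r+1)/3 < r ∧ 3*((3*r+1)/3) < 3*r+2)) from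
          ih4 ⟨3*r, hA⟩ ⟨3*r+2, hC⟩ haliveA haliveC hACne]
        simp only [Xor', Xor]
        omega
      refine ⟨?_, ?_, ?_, ?_⟩
      -- I1 preserved
      · intro a ha p p' hal hal' hpp
        have halp : (p.val % 3 = 1 ∨ 3*r ≤ p.val) := by omega
        have halp' : (p'.val % 3 = 1 ∨ 3*r ≤ p'.val) := by omega
        have hpA : p ≠ ⟨3*r, hA⟩ := Fin.ne_of_val_ne (by omega)
        have hpC : p ≠ ⟨3*r+2, hC⟩ := Fin.ne_of_val_ne (by omega)
        have hp'A : p' ≠ ⟨3*r, hA⟩ := Fin.ne_of_val_ne (by omega)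
        have hp'C : p' ≠ ⟨3*r+2, hC⟩ := Fin.ne_of_val_ne (by omega)
        rw [hGr, adj_pivot _ _ _ _ _ hedge (hne _ _ _ _ hpp) (hne _ _ _ _ hpA)
          (hne _ _ _ _ hpC) (hne _ _ _ _ hp'A) (hne _ _ _ _ hp'C)]
        have e1 := ih1 a ha p p' halp halp' hpp
        have e2 := ih1 a ha p ⟨3*r, hA⟩ halp haliveA hpA
        have e3 := ih1 j₁ hj p' ⟨3*r, hA⟩ halp' haliveA hp'A
        simp only [Xor']
        rintro (⟨h, -⟩ | ⟨(⟨⟨h, -⟩, -⟩ | ⟨⟨-, h⟩, -⟩), -⟩)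
        exacts [e1 h, e2 h, e3 h]
      -- I2 preserved
      · intro a ha p p' hal hal' hpp
        have halp : (p.val % 3 = 1 ∨ 3*r ≤ p.val) := by omega
        have halp' : (p'.val % 3 = 1 ∨ 3*r ≤ p'.val) := by omega
        have hpA : p ≠ ⟨3*r, hA⟩ := Fin.ne_of_val_ne (by omega)
        have hpC : p ≠ ⟨3*r+2, hC⟩ := Fin.ne_of_val_ne (by omega)
        have hp'A : p' ≠ ⟨3*r, hA⟩ := Fin.ne_of_val_ne (by omega)
        have hp'C : p' ≠ ⟨3*r+2, hC⟩ := Fin.ne_of_val_ne (by omega)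
        rw [hGr, adj_pivot _ _ _ _ _ hedge (hne _ _ _ _ hpp) (hne _ _ _ _ hpA)
          (hne _ _ _ _ hpC) (hne _ _ _ _ hp'A) (hne _ _ _ _ hp'C)]
        have e1 := ih2 a ha p p' halp halp' hpp
        have e2 := ih1 a (ha.trans hj) p ⟨3*r, hA⟩ halp haliveA hpA
        have e3 := ih2 a ha p ⟨3*r+2, hC⟩ halp haliveC hpC
        simp only [Xor']
        rintro (⟨h, -⟩ | ⟨(⟨⟨h, -⟩, -⟩ | ⟨⟨h, -⟩, -⟩), -⟩)
        exacts [e1 h, e2 h, e3 h]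
      -- I3 preserved
      · intro a b hab p p' hal hal' hpp
        have halp : (p.val % 3 = 1 ∨ 3*r ≤ p.val) := by omega
        have halp' : (p'.val % 3 = 1 ∨ 3*r ≤ p'.val) := by omega
        have hpA : p ≠ ⟨3*r, hA⟩ := Fin.ne_of_val_ne (by omega)
        have hpC : p ≠ ⟨3*r+2, hC⟩ := Fin.ne_of_val_ne (by omega)
        have hp'A : p' ≠ ⟨3*r, hA⟩ := Fin.ne_of_val_ne (by omega)
        have hp'C : p' ≠ ⟨3*r+2, hC⟩ := Fin.ne_of_val_ne (by omega)
        rw [hGr, adj_pivot _ _ _ _ _ hedge (hne _ _ _ _ hpp) (hne _ _ _ _ hpA)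
          (hne _ _ _ _ hpC) (hne _ _ _ _ hp'A) (hne _ _ _ _ hp'C)]
        have e1 := ih3 a b hab p p' halp halp' hpp
        rcases hab with hlt | ⟨heq, hblt⟩
        · have e2 := ih1 a (hlt.trans hj) p ⟨3*r, hA⟩ halp haliveA hpA
          have e3 := ih2 a hlt p ⟨3*r+2, hC⟩ halp haliveC hpC
          simp only [Xor']
          rintro (⟨h, -⟩ | ⟨(⟨⟨h, -⟩, -⟩ | ⟨⟨h, -⟩, -⟩), -⟩)
          exacts [e1 h, e2 h, e3 h]
        · have e2 := ih1 a (by rw [heq]; exact hj) p ⟨3*r, hA⟩ halp haliveA hpA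
          have e3 := ih1 b hblt p' ⟨3*r, hA⟩ halp' haliveA hp'A
          simp only [Xor']
          rintro (⟨h, -⟩ | ⟨(⟨⟨h, -⟩, -⟩ | ⟨⟨-, h⟩, -⟩), -⟩)
          exacts [e1 h, e2 h, e3 h]
      -- pattern
      · intro p p' hal hal' hpp
        have halp : (p.val % 3 = 1 ∨ 3*r ≤ p.val) := by omega
        have halp' : (p'.val % 3 = 1 ∨ 3*r ≤ p'.val) := by omega
        have hpA : p ≠ ⟨3*r, hA⟩ := Fin.ne_of_val_ne (by omega)
        have hpC : p ≠ ⟨3*r+2, hC⟩ := Fin.ne_of_val_ne (by omega)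
        have hp'A : p' ≠ ⟨3*r, hA⟩ := Fin.ne_of_val_ne (by omega)
        have hp'C : p' ≠ ⟨3*r+2, hC⟩ := Fin.ne_of_val_ne (by omega)
        rw [hGr, adj_pivot _ _ _ _ _ hedge (hne _ _ _ _ hpp) (hne _ _ _ _ hpA)
          (hne _ _ _ _ hpC) (hne _ _ _ _ hp'A) (hne _ _ _ _ hp'C)]
        have e1 := ih4 p p' halp halp' hpp
        have e2 : ((seqGraph G f g r).Adj (X (s p) j₁) (X (s ⟨3*r, hA⟩) j₁)) ↔ False :=
          iff_false_intro (ih1 j₁ hj p ⟨3*r, hA⟩ halp haliveA hpA)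
        have e3 : ((seqGraph G f g r).Adj (X (s p) j₁) (X (s ⟨3*r+2, hC⟩) j₂)) ↔
            Xor' (p.val < 3*r+2) ((p.val+1)/3 < r ∧ 3*((p.val+1)/3) < 3*r+2) :=
          ih4 p ⟨3*r+2, hC⟩ halp haliveC hpC
        have e4 : ((seqGraph G f g r).Adj (X (s ⟨3*r, hA⟩) j₁) (X (s p') j₂)) ↔
            Xor' (3*r < p'.val) ((3*r+1)/3 < r ∧ 3*((3*r+1)/3) < p'.val) :=
          ih4 ⟨3*r, hA⟩ p' haliveA halp' hp'A.symm
        have e4' : ((seqGraph G f g r).Adj (X (s p') j₂) (X (s ⟨3*r, hA⟩) j₁)) ↔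
            Xor' (3*r < p'.val) ((3*r+1)/3 < r ∧ 3*((3*r+1)/3) < p'.val) := by
          rw [← e4]
          exact (seqGraph G f g r).adj_comm _ _
        rw [e1, e2, e3, e4']
        simp only [Xor', Xor, false_and, and_false, false_or, not_false_iff, and_true, or_false]
        omega
  -- conclusion
  obtain ⟨m1, m2, m3, m4⟩ := main k (le_refl k)
  refine ⟨seqGraph G f g k, ?_, ?_, ?_⟩
  · apply seqGraph_locEquiv
    · intro q hq
      constructor
      · exact ⟨_, _, rfl⟩
      · intro q' hq' j hEq
        have h2 : ((s q', j) : Fin R × Fin c) =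
            (s ⟨3*(q % k), by have := Nat.mod_lt q hk; omega⟩, j₁) := hX hEq
        have h3 := hs (congrArg Prod.fst h2)
        have h4 := congrArg Fin.val h3
        simp only at h4
        rw [Nat.mod_eq_of_lt hq] at h4
        omega
    · intro q hq
      constructor
      · exact ⟨_, _, rfl⟩
      · intro q' hq' j hEq
        have h2 : ((s q', j) : Fin R × Fin c) =
            (s ⟨3*(q % k)+2, by have := Nat.mod_lt q hk; omega⟩, j₂) := hX hEq
        have h3 := hs (congrArg Prod.fst h2)
        have h4 := congrArg Fin.val h3
        simp only at h4
        rw [Nat.mod_eq_of_lt hq] at h4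
        omega
  · intro a b hab p p' hp hp' hpp
    exact m3 a b hab p p' (Or.inl hp) (Or.inl hp') hpp
  · intro p p' hp hp' hpp
    rw [m4 p p' (Or.inl hp) (Or.inl hp') hpp]
    simp only [Xor', Xor]
    omega

end Core


/-- Let `0 ≤ l < C(c,2) + c` and let `R` satisfy the 4-colour Ramsey
property for monochromatic sets of size `3k`. If `X` is a `c`-uniform chain of length `R`
in `G` whose first `l` pairs (in lexicographic order) are fixed, then by locally
complementing only at vertices of `V(X) \ V(Y)` one can reach a graph `G~` together with a
subchain `Y` of `X` of length `k` whose first `l + 1` pairs are fixed. -/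
theorem fix_next_pair {V : Type} [Fintype V] (c k l R : ℕ)
    (hl : l < Nat.choose c 2 + c)
    (hR : ∀ f : Fin R → Fin R → Fin 4, (∀ x y, f x y = f y x) →
      ∃ (col : Fin 4) (s : Finset (Fin R)), s.card = 3 * k ∧
        ∀ x ∈ s, ∀ y ∈ s, x ≠ y → f x y = col)
    (G : SimpleGraph V) (X : Fin R → Fin c → V)
    (hchain : Function.Injective fun p : Fin R × Fin c => X p.1 p.2)
    (hfix : ∀ j₁ j₂ : Fin c, j₁ ≤ j₂ → pairIdx c j₁ j₂ < l → FixedPair G X j₁ j₂) :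
    ∃ (Gt : SimpleGraph V) (σ : Fin k → Fin R), StrictMono σ ∧
      LocEquivWithin
        {v | (∃ i j, X i j = v) ∧ ¬ ∃ i j, X (σ i) j = v} G Gt ∧
      ∀ j₁ j₂ : Fin c, j₁ ≤ j₂ → pairIdx c j₁ j₂ < l + 1 →
        FixedPair Gt (fun i j => X (σ i) j) j₁ j₂ := by
  classical
  -- trivial case k = 0
  rcases Nat.eq_zero_or_pos k with rfl | hk
  · refine ⟨G, fun t => t.elim0, fun t => t.elim0, locEquiv_refl _ _, ?_⟩
    intro a b _ _ i₁
    exact i₁.elim0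
  -- the pair to be fixed
  obtain ⟨j₁, j₂, hj12, hl'⟩ := exists_pairIdx_eq hl
  have hXne : ∀ (i m : Fin R) (a b : Fin c), i ≠ m → X i a ≠ X m b := by
    intro i m a b him h
    have h2 : ((i, a) : Fin R × Fin c) = (m, b) := hchain h
    exact him (congrArg Prod.fst h2)
  -- all lexicographically earlier pairs are fixed
  have hold : ∀ a b : Fin c, lexLt a b j₁ j₂ → ∀ i m : Fin R, i ≠ m →
      ¬ G.Adj (X i a) (X m b) := by
    intro a b hab i m him hadj
    rcases le_or_gt a b with hle | hba
    · have hidx : pairIdx c a b < l := by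
        have := pairIdx_lt_of_lexLt hle hab
        omega
      exact hfix a b hle hidx i m him hadj
    · have hba' : lexLt b a j₁ j₂ := by
        rcases hab with h | ⟨h1, h2⟩
        · exact Or.inl (hba.trans h)
        · exact Or.inl (h1 ▸ hba)
      have hidx : pairIdx c b a < l := by
        have := pairIdx_lt_of_lexLt (le_of_lt hba) hba'
        omega
      exact hfix b a (le_of_lt hba) hidx m i (Ne.symm him) hadj.symm
  have I1 : ∀ a : Fin c, a < j₂ → ∀ i m : Fin R, i ≠ m → ¬ G.Adj (X i a) (X m j₁) := by
    intro a ha i m him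
    rcases lt_trichotomy a j₁ with h | h | h
    · exact hold a j₁ (Or.inl h) i m him
    · exact hold a j₁ (Or.inr ⟨h, h ▸ ha⟩) i m him
    · intro hadj
      exact hold j₁ a (Or.inr ⟨rfl, ha⟩) m i (Ne.symm him) hadj.symm
  have I2 : ∀ a : Fin c, a < j₁ → ∀ i m : Fin R, i ≠ m → ¬ G.Adj (X i a) (X m j₂) := by
    intro a ha i m him
    exact hold a j₂ (Or.inl ha) i m him
  -- Ramsey colouring
  have hcol4 : ∀ P Q : Prop, (if P then 1 else 0) + 2*(if Q then 1 else 0) < 4 := by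
    intro P Q
    split <;> split <;> omega
  set f : Fin R → Fin R → Fin 4 := fun x y =>
    if x < y then ⟨(if G.Adj (X x j₁) (X y j₂) then 1 else 0) +
        2*(if G.Adj (X y j₁) (X x j₂) then 1 else 0), hcol4 _ _⟩
    else if y < x then ⟨(if G.Adj (X y j₁) (X x j₂) then 1 else 0) +
        2*(if G.Adj (X x j₁) (X y j₂) then 1 else 0), hcol4 _ _⟩
    else 0 with hfdef2
  have hsym : ∀ x y, f x y = f y x := by
    intro x y
    rcases lt_trichotomy x y with h | h | h
    · rw [hfdef2]
      simp only
      rw [if_pos h, if_neg (asymm h), if_pos h]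
    · subst h; rfl
    · rw [hfdef2]
      simp only
      rw [if_neg (asymm h), if_pos h, if_pos h]
  obtain ⟨col, S, hScard, hmono⟩ := hR f hsym
  have hScard' : S.card = 3 * k := hScard
  set e : Fin (3*k) ↪o Fin R := S.orderEmbOfFin hScard' with hedef
  have hmem : ∀ p : Fin (3*k), e p ∈ S := fun p => Finset.orderEmbOfFin_mem S hScard' p
  have hemono : StrictMono e := e.strictMono
  set E1 : Prop := col.val % 2 = 1 with hE1def
  set E2 : Prop := 2 ≤ col.val with hE2def
  have key : ∀ p p' : Fin (3*k), p < p' →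
      ((G.Adj (X (e p) j₁) (X (e p') j₂) ↔ E1) ∧
       (G.Adj (X (e p') j₁) (X (e p) j₂) ↔ E2)) := by
    intro p p' hpp
    have hlt : e p < e p' := hemono hpp
    have hcol := hmono (e p) (hmem p) (e p') (hmem p') (ne_of_lt hlt)
    rw [hfdef2] at hcol
    simp only at hcol
    rw [if_pos hlt] at hcol
    have hv := congrArg Fin.val hcol
    simp only at hv
    by_cases hP : G.Adj (X (e p) j₁) (X (e p') j₂) <;>
      by_cases hQ : G.Adj (X (e p') j₁) (X (e p) j₂) <;>
      simp only [hP, hQ, if_true, if_false, ite_true, ite_false] at hv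
    · exact ⟨iff_of_true hP (by omega), iff_of_true hQ (by omega)⟩
    · exact ⟨iff_of_true hP (by omega), iff_of_false hQ (by omega)⟩
    · exact ⟨iff_of_false hP (by omega), iff_of_true hQ (by omega)⟩
    · exact ⟨iff_of_false hP (by omega), iff_of_false hQ (by omega)⟩
  have hpat2 : ∀ p p' : Fin (3*k), p ≠ p' →
      (G.Adj (X (e p) j₁) (X (e p') j₂) ↔ ((p < p' ∧ E1) ∨ (p' < p ∧ E2))) := by
    intro p p' hpp
    rcases lt_or_gt_of_ne hpp with h | h
    · rw [(key p p' h).1]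
      constructor
      · intro hE; exact Or.inl ⟨h, hE⟩
      · rintro (⟨-, hE⟩ | ⟨h', -⟩)
        · exact hE
        · exact absurd h (asymm h')
    · rw [(key p' p h).2]
      constructor
      · intro hE; exact Or.inr ⟨h, hE⟩
      · rintro (⟨h', -⟩ | ⟨-, hE⟩)
        · exact absurd h' (asymm h)
        · exact hE
  -- the canonical kept subsequence
  have hk3 : 3 ≤ 3*k := by omega
  set σ0 : Fin k → Fin R := fun t => e ⟨3*t.val+1, by have := t.isLt; omega⟩ with hσ0def
  have hσ0mono : StrictMono σ0 := by
    intro t t' h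
    apply hemono
    rw [Fin.mk_lt_mk]
    have := (Fin.lt_def).1 h
    omega
  have hσ0ne : ∀ t t' : Fin k, t ≠ t' → σ0 t ≠ σ0 t' := fun t t' h =>
    fun hh => h (hσ0mono.injective hh)
  -- generic finishing step
  have finish : ∀ (Gt : SimpleGraph V) (σ : Fin k → Fin R), StrictMono σ →
      LocEquivWithin {v | (∃ i j, X i j = v) ∧ ¬ ∃ i j, X (σ i) j = v} G Gt →
      (∀ a b : Fin c, lexLt a b j₁ j₂ → ∀ i₁ i₂ : Fin k, i₁ ≠ i₂ →
        ¬ Gt.Adj (X (σ i₁) a) (X (σ i₂) b)) →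
      (∀ i₁ i₂ : Fin k, i₁ ≠ i₂ → ¬ Gt.Adj (X (σ i₁) j₁) (X (σ i₂) j₂)) →
      (∃ (Gt : SimpleGraph V) (σ : Fin k → Fin R), StrictMono σ ∧
        LocEquivWithin
          {v | (∃ i j, X i j = v) ∧ ¬ ∃ i j, X (σ i) j = v} G Gt ∧
        ∀ a b : Fin c, a ≤ b → pairIdx c a b < l + 1 →
          FixedPair Gt (fun i j => X (σ i) j) a b) := by
    intro Gt σ h1 h2 h3 h4
    refine ⟨Gt, σ, h1, h2, ?_⟩
    intro a b hab hidx
    rcases Nat.lt_or_ge (pairIdx c a b) l with h | h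
    · intro i₁ i₂ hne12
      exact h3 a b (lexLt_of_pairIdx_lt hab hj12 (by omega)) i₁ i₂ hne12
    · have heq : pairIdx c a b = pairIdx c j₁ j₂ := by omega
      obtain ⟨rfl, rfl⟩ := pairIdx_eq_iff hab hj12 heq
      intro i₁ i₂ hne12
      exact h4 i₁ i₂ hne12
  rcases hj12.lt_or_eq with hj | hj
  · -- j₁ < j₂
    have htail : ∀ (s : Fin (3*k) → Fin R), Function.Injective s →
        (∀ p p' : Fin (3*k), p ≠ p' → (G.Adj (X (s p) j₁) (X (s p') j₂) ↔ p < p')) →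
        (∀ t : Fin k, ∃ q : Fin (3*k), q.val % 3 = 1 ∧
          s q = e ⟨3*t.val+1, by have := t.isLt; omega⟩) →
        (∃ (Gt : SimpleGraph V) (σ : Fin k → Fin R), StrictMono σ ∧
          LocEquivWithin
            {v | (∃ i j, X i j = v) ∧ ¬ ∃ i j, X (σ i) j = v} G Gt ∧
          ∀ a b : Fin c, a ≤ b → pairIdx c a b < l + 1 →
            FixedPair Gt (fun i j => X (σ i) j) a b) := by
      intro s hs hpatS hcov
      obtain ⟨Gt, hloc, holdS, hnewS⟩ :=
        core G X hchain j₁ j₂ hj k hk s hs I1 I2 hold hpatS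
      refine finish Gt σ0 hσ0mono ?_ ?_ ?_
      · refine locEquiv_mono ?_ hloc
        rintro v ⟨hv1, hv2⟩
        refine ⟨hv1, ?_⟩
        rintro ⟨t, j, hEq⟩
        obtain ⟨q, hq1, hq2⟩ := hcov t
        exact hv2 q hq1 j (by rw [hq2]; exact hEq)
      · intro a b hab i₁ i₂ hne12
        obtain ⟨q₁, hq1, hs1⟩ := hcov i₁
        obtain ⟨q₂, hq2, hs2⟩ := hcov i₂
        have hqq : q₁ ≠ q₂ := by
          intro h
          apply hσ0ne i₁ i₂ hne12
          rw [hσ0def]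
          simp only
          rw [← hs1, ← hs2, h]
        have hres := holdS a b hab q₁ q₂ hq1 hq2 hqq
        rw [hs1, hs2] at hres
        exact hres
      · intro i₁ i₂ hne12
        obtain ⟨q₁, hq1, hs1⟩ := hcov i₁
        obtain ⟨q₂, hq2, hs2⟩ := hcov i₂
        have hqq : q₁ ≠ q₂ := by
          intro h
          apply hσ0ne i₁ i₂ hne12
          rw [hσ0def]
          simp only
          rw [← hs1, ← hs2, h]
        have hres := hnewS q₁ q₂ hq1 hq2 hqq
        rw [hs1, hs2] at hres
        exact hres
    by_cases hE1 : E1 <;> by_cases hE2 : E2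
    · -- both directions present: a single pivot
      have h01 : (⟨0, by omega⟩ : Fin (3*k)) < ⟨1, by omega⟩ := by
        rw [Fin.mk_lt_mk]; omega
      have h01' : (⟨0, by omega⟩ : Fin (3*k)) ≠ ⟨1, by omega⟩ := ne_of_lt h01
      set u : V := X (e ⟨0, by omega⟩) j₁ with hudef
      set w : V := X (e ⟨1, by omega⟩) j₂ with hwdef
      have huw : G.Adj u w := by
        rw [hudef, hwdef, hpat2 _ _ h01']
        exact Or.inl ⟨h01, hE1⟩
      set σ' : Fin k → Fin R := fun t => e ⟨t.val+2, by have := t.isLt; omega⟩ with hσ'def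
      have hσ'mono : StrictMono σ' := by
        intro t t' h
        apply hemono
        rw [Fin.mk_lt_mk]
        have := (Fin.lt_def).1 h
        omega
      have hσ'ne : ∀ t t' : Fin k, t ≠ t' → σ' t ≠ σ' t' := fun t t' h =>
        fun hh => h (hσ'mono.injective hh)
      have hpos0 : ∀ t : Fin k, (⟨t.val+2, by have := t.isLt; omega⟩ : Fin (3*k)) ≠
          ⟨0, by omega⟩ := fun t => Fin.ne_of_val_ne (by simp only [Fin.val_mk]; omega)
      have hpos1 : ∀ t : Fin k, (⟨t.val+2, by have := t.isLt; omega⟩ : Fin (3*k)) ≠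
          ⟨1, by omega⟩ := fun t => Fin.ne_of_val_ne (by simp only [Fin.val_mk]; omega)
      have hposne : ∀ t t' : Fin k, t ≠ t' →
          (⟨t.val+2, by have := t.isLt; omega⟩ : Fin (3*k)) ≠
          ⟨t'.val+2, by have := t'.isLt; omega⟩ := by
        intro t t' h
        apply Fin.ne_of_val_ne
        simp only
        intro hh
        exact h (Fin.ext (by omega))
      have hne0 : ∀ (t : Fin k) (a : Fin c), X (σ' t) a ≠ u := by
        intro t a
        rw [hudef, hσ'def]
        exact hXne _ _ _ _ (fun h => (hpos0 t) (hemono.injective h))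
      have hne1 : ∀ (t : Fin k) (a : Fin c), X (σ' t) a ≠ w := by
        intro t a
        rw [hwdef, hσ'def]
        exact hXne _ _ _ _ (fun h => (hpos1 t) (hemono.injective h))
      refine finish (pivot G u w) σ' hσ'mono ?_ ?_ ?_
      · refine locEquiv_pivot u w ?_ ?_ (locEquiv_refl _ _)
        · refine ⟨⟨_, _, rfl⟩, ?_⟩
          rintro ⟨t, j, hEq⟩
          exact (hne0 t j) hEq
        · refine ⟨⟨_, _, rfl⟩, ?_⟩
          rintro ⟨t, j, hEq⟩
          exact (hne1 t j) hEq
      · intro a b hab i₁ i₂ hne12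
        rw [adj_pivot _ _ _ _ _ huw (hXne _ _ _ _ (hσ'ne i₁ i₂ hne12))
          (hne0 i₁ a) (hne1 i₁ a) (hne0 i₂ b) (hne1 i₂ b)]
        have e1 : ¬ G.Adj (X (σ' i₁) a) (X (σ' i₂) b) :=
          hold a b hab _ _ (hσ'ne i₁ i₂ hne12)
        rcases hab with ha | ⟨ha, hb⟩
        · have e2 : ¬ G.Adj (X (σ' i₁) a) u := by
            rw [hudef]
            exact I1 a (ha.trans hj) _ _ (fun h => (hpos0 i₁) (hemono.injective h))
          have e3 : ¬ G.Adj (X (σ' i₁) a) w := by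
            rw [hwdef]
            exact I2 a ha _ _ (fun h => (hpos1 i₁) (hemono.injective h))
          simp only [Xor']
          rintro (⟨h, -⟩ | ⟨(⟨⟨h, -⟩, -⟩ | ⟨⟨h, -⟩, -⟩), -⟩)
          exacts [e1 h, e2 h, e3 h]
        · have e2 : ¬ G.Adj (X (σ' i₁) a) u := by
            rw [hudef]
            exact I1 a (by rw [ha]; exact hj) _ _
              (fun h => (hpos0 i₁) (hemono.injective h))
          have e3 : ¬ G.Adj (X (σ' i₂) b) u := by
            rw [hudef]
            exact I1 b hb _ _ (fun h => (hpos0 i₂) (hemono.injective h))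
          simp only [Xor']
          rintro (⟨h, -⟩ | ⟨(⟨⟨h, -⟩, -⟩ | ⟨⟨-, h⟩, -⟩), -⟩)
          exacts [e1 h, e2 h, e3 h]
      · intro i₁ i₂ hne12
        have hposnei : (⟨i₁.val+2, by have := i₁.isLt; omega⟩ : Fin (3*k)) ≠
            ⟨i₂.val+2, by have := i₂.isLt; omega⟩ := hposne i₁ i₂ hne12
        rw [adj_pivot _ _ _ _ _ huw (hXne _ _ _ _ (hσ'ne i₁ i₂ hne12))
          (hne0 i₁ j₁) (hne1 i₁ j₁) (hne0 i₂ j₂) (hne1 i₂ j₂)]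
        have hxy : G.Adj (X (σ' i₁) j₁) (X (σ' i₂) j₂) := by
          rw [hσ'def]
          simp only
          rw [hpat2 _ _ hposnei]
          rcases lt_or_gt_of_ne hposnei with h | h
          · exact Or.inl ⟨h, hE1⟩
          · exact Or.inr ⟨h, hE2⟩
        have hxu : ¬ G.Adj (X (σ' i₁) j₁) u := by
          rw [hudef]
          exact I1 j₁ hj _ _ (fun h => (hpos0 i₁) (hemono.injective h))
        have hxw : G.Adj (X (σ' i₁) j₁) w := by
          rw [hwdef, hσ'def]
          simp only
          rw [hpat2 _ _ (hpos1 i₁)]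
          exact Or.inr ⟨by rw [Fin.mk_lt_mk]; omega, hE2⟩
        have hyu : G.Adj (X (σ' i₂) j₂) u := by
          rw [hudef, hσ'def]
          simp only
          have := (hpat2 ⟨0, by omega⟩ _ (Ne.symm (hpos0 i₂))).2
            (Or.inl ⟨by rw [Fin.mk_lt_mk]; omega, hE1⟩)
          exact this.symm
        simp only [Xor']
        rintro (⟨-, hn⟩ | ⟨-, hn⟩)
        · exact hn (Or.inr ⟨⟨hxw, hyu⟩, fun hc => hxu hc.1⟩)
        · exact hn hxy
    · -- E1 and not E2 : the triangular case
      refine htail (fun p => e p) hemono.injective ?_ ?_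
      · intro p p' hpp
        rw [hpat2 p p' hpp]
        constructor
        · rintro (⟨h, -⟩ | ⟨-, hE⟩)
          · exact h
          · exact absurd hE hE2
        · intro h
          exact Or.inl ⟨h, hE1⟩
      · intro t
        exact ⟨⟨3*t.val+1, by have := t.isLt; omega⟩, by simp only [Fin.val_mk]; omega, rfl⟩
    · -- not E1 and E2 : the reversed triangular case
      refine htail (fun p => e ⟨3*k-1-p.val, by have := p.isLt; omega⟩) ?_ ?_ ?_
      · intro p p' h
        have h2 := hemono.injective h
        have h3 : 3*k-1-p.val = 3*k-1-p'.val := congrArg Fin.val h2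
        have hp := p.isLt
        have hp' := p'.isLt
        exact Fin.ext (by omega)
      · intro p p' hpp
        have hvne : p.val ≠ p'.val := fun h => hpp (Fin.ext h)
        have hp := p.isLt
        have hp' := p'.isLt
        have hrne : (⟨3*k-1-p.val, by omega⟩ : Fin (3*k)) ≠ ⟨3*k-1-p'.val, by omega⟩ :=
          Fin.ne_of_val_ne (by simp only [Fin.val_mk]; omega)
        rw [hpat2 _ _ hrne]
        rw [Fin.lt_def, Fin.lt_def]
        simp only [Fin.lt_def]
        constructor
        · rintro (⟨h, hE⟩ | ⟨h, -⟩)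
          · exact absurd hE hE1
          · omega
        · intro h
          refine Or.inr ⟨?_, hE2⟩
          omega
      · intro t
        have htlt := t.isLt
        refine ⟨⟨3*(k-1-t.val)+1, by omega⟩, by simp only [Fin.val_mk]; omega, ?_⟩
        apply congrArg e
        apply Fin.ext
        simp only [Fin.val_mk]
        omega
    · -- neither direction: already fixed
      refine finish G σ0 hσ0mono (locEquiv_refl _ _) ?_ ?_
      · intro a b hab i₁ i₂ hne12
        exact hold a b hab _ _ (hσ0ne i₁ i₂ hne12)
      · intro i₁ i₂ hne12
        have hpne : (⟨3*i₁.val+1, by have := i₁.isLt; omega⟩ : Fin (3*k)) ≠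
            ⟨3*i₂.val+1, by have := i₂.isLt; omega⟩ := by
          apply Fin.ne_of_val_ne
          simp only [Fin.val_mk]
          intro hh
          exact hne12 (Fin.ext (by omega))
        rw [hσ0def]
        simp only
        rw [hpat2 _ _ hpne]
        rintro (⟨-, hE⟩ | ⟨-, hE⟩)
        · exact hE1 hE
        · exact hE2 hE
  · -- diagonal case j₁ = j₂
    subst hj
    have h01 : (⟨0, by omega⟩ : Fin (3*k)) < ⟨1, by omega⟩ := by
      rw [Fin.mk_lt_mk]; omega
    have hE12 : E1 ↔ E2 := by
      have hk1 := key ⟨0, by omega⟩ ⟨1, by omega⟩ h01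
      rw [← hk1.1, ← hk1.2]
      exact G.adj_comm _ _
    have hpos0 : ∀ t : Fin k, (⟨3*t.val+1, by have := t.isLt; omega⟩ : Fin (3*k)) ≠
        ⟨0, by omega⟩ := fun t => Fin.ne_of_val_ne (by simp only [Fin.val_mk]; omega)
    have hposne : ∀ t t' : Fin k, t ≠ t' →
        (⟨3*t.val+1, by have := t.isLt; omega⟩ : Fin (3*k)) ≠
        ⟨3*t'.val+1, by have := t'.isLt; omega⟩ := by
      intro t t' h
      apply Fin.ne_of_val_ne
      simp only
      intro hh
      exact h (Fin.ext (by omega))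
    by_cases hE1 : E1
    · -- clique case : one local complementation
      have hE2 : E2 := hE12.1 hE1
      have hall : ∀ p p' : Fin (3*k), p ≠ p' → G.Adj (X (e p) j₁) (X (e p') j₁) := by
        intro p p' hpp
        rw [hpat2 p p' hpp]
        rcases lt_or_gt_of_ne hpp with h | h
        · exact Or.inl ⟨h, hE1⟩
        · exact Or.inr ⟨h, hE2⟩
      set v : V := X (e ⟨0, by omega⟩) j₁ with hvdef
      have hne0 : ∀ (t : Fin k) (a : Fin c), X (σ0 t) a ≠ v := by
        intro t a
        rw [hvdef, hσ0def]
        exact hXne _ _ _ _ (fun h => (hpos0 t) (hemono.injective h))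
      refine finish (localComp G v) σ0 hσ0mono ?_ ?_ ?_
      · refine locEquiv_step v ?_ (locEquiv_refl _ _)
        refine ⟨⟨_, _, rfl⟩, ?_⟩
        rintro ⟨t, j, hEq⟩
        exact (hne0 t j) hEq
      · intro a b hab i₁ i₂ hne12
        rw [adj_localComp _ _ _ _ (hXne _ _ _ _ (hσ0ne i₁ i₂ hne12))]
        have e1 : ¬ G.Adj (X (σ0 i₁) a) (X (σ0 i₂) b) :=
          hold a b hab _ _ (hσ0ne i₁ i₂ hne12)
        rcases hab with ha | ⟨ha, hb⟩
        · have e2 : ¬ G.Adj v (X (σ0 i₁) a) := by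
            intro h
            rw [hvdef] at h
            exact I1 a ha _ _ (fun hh => (hpos0 i₁) (hemono.injective hh)) h.symm
          simp only [Xor']
          rintro (⟨h, -⟩ | ⟨⟨h, -⟩, -⟩)
          exacts [e1 h, e2 h]
        · have e2 : ¬ G.Adj v (X (σ0 i₂) b) := by
            intro h
            rw [hvdef] at h
            exact I1 b hb _ _ (fun hh => (hpos0 i₂) (hemono.injective hh)) h.symm
          simp only [Xor']
          rintro (⟨h, -⟩ | ⟨⟨-, h⟩, -⟩)
          exacts [e1 h, e2 h]
      · intro i₁ i₂ hne12
        rw [adj_localComp _ _ _ _ (hXne _ _ _ _ (hσ0ne i₁ i₂ hne12))]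
        have hxy : G.Adj (X (σ0 i₁) j₁) (X (σ0 i₂) j₁) := by
          rw [hσ0def]
          exact hall _ _ (hposne i₁ i₂ hne12)
        have hvx : G.Adj v (X (σ0 i₁) j₁) := by
          rw [hvdef, hσ0def]
          exact hall _ _ (Ne.symm (hpos0 i₁))
        have hvy : G.Adj v (X (σ0 i₂) j₁) := by
          rw [hvdef, hσ0def]
          exact hall _ _ (Ne.symm (hpos0 i₂))
        simp only [Xor']
        rintro (⟨-, hn⟩ | ⟨-, hn⟩)
        · exact hn ⟨hvx, hvy⟩
        · exact hn hxy
    · -- independent case : nothing to do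
      have hE2 : ¬ E2 := fun h => hE1 (hE12.2 h)
      refine finish G σ0 hσ0mono (locEquiv_refl _ _) ?_ ?_
      · intro a b hab i₁ i₂ hne12
        exact hold a b hab _ _ (hσ0ne i₁ i₂ hne12)
      · intro i₁ i₂ hne12
        rw [hσ0def]
        simp only
        rw [hpat2 _ _ (hposne i₁ i₂ hne12)]
        rintro (⟨-, hE⟩ | ⟨-, hE⟩)
        · exact hE1 hE
        · exact hE2 hE


end EP
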